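/- Let A be the adjacency matrix of a simple undirected graph G on n vertices, let 3 ≤ k ≤ n, let m ∈ ℕ^k with m_i ≥ 1 for all i and Σ_{i=1}^k m_i = n, and suppose m_2 = m_3 = … = m_{k−1}. If for r = 1 every partition matrix X ∈ P_m satisfies ⟨A, X B_{1,k} Xᵀ⟩ > 0, then bdw(A) > m_2. -/
import Mathlib


open Matrix Finset

attribute [local instance] Classical.propDecidable

noncomputable section

/-- Trace inner product `⟨A,B⟩ = trace(Aᵀ B)`. -/
def traceInner {n : ℕ} (A B : Matrix (Fin n) (Fin n) ℝ) : ℝ :=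
  Matrix.trace (Aᵀ * B)

/-- `A` is the adjacency matrix of a simple undirected graph:
symmetric 0–1 matrix with zero diagonal. -/
def IsAdjacency {n : ℕ} (A : Matrix (Fin n) (Fin n) ℝ) : Prop :=
  (∀ i j, A i j = 0 ∨ A i j = 1) ∧ (∀ i j, A i j = A j i) ∧ ∀ i, A i i = 0

/-- Bandwidth of the graph with adjacency matrix `A` under the labeling `φ`. -/
def bdwLabel {n : ℕ} (A : Matrix (Fin n) (Fin n) ℝ) (φ : Equiv.Perm (Fin n)) : ℕ :=
  Finset.sup Finset.univ fun p : Fin n × Fin n =>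
    if A p.1 p.2 ≠ 0 then (((φ p.1 : ℕ) : ℤ) - ((φ p.2 : ℕ) : ℤ)).natAbs else 0

/-- Bandwidth of the graph with adjacency matrix `A`:
minimum over all labelings. -/
def bdw {n : ℕ} (A : Matrix (Fin n) (Fin n) ℝ) : ℕ :=
  ⨅ φ : Equiv.Perm (Fin n), bdwLabel A φ

/-- `n × k` partition matrices for block sizes `m 0, …, m (k-1)`. -/
def IsPartitionMatrix (n k : ℕ) (m : ℕ → ℕ) (X : Matrix (Fin n) (Fin k) ℝ) : Prop :=
  (∀ i j, X i j = 0 ∨ X i j = 1) ∧ (∀ i, ∑ j, X i j = 1) ∧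
  ∀ j : Fin k, ∑ i, X i j = (m (j : ℕ) : ℝ)

/-- The matrix `B_{r,k}`, with `(B_{r,k})_{uv} = 1` iff `|u - v| > r`. -/
def Bmat (k r : ℕ) : Matrix (Fin k) (Fin k) ℝ :=
  Matrix.of fun u v : Fin k =>
    if (r : ℤ) < |((u : ℕ) : ℤ) - ((v : ℕ) : ℤ)| then 1 else 0

/-- The basic partition matrix `X̄`: the first `m 0` vertices in block `0`,
the next `m 1` vertices in block `1`, and so on. -/
def basicPartition (n k : ℕ) (m : ℕ → ℕ) : Matrix (Fin n) (Fin k) ℝ :=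
  Matrix.of fun (i : Fin n) (j : Fin k) =>
    if (∑ l ∈ Finset.range (j : ℕ), m l) ≤ (i : ℕ) ∧
        (i : ℕ) < ∑ l ∈ Finset.range ((j : ℕ) + 1), m l then 1 else 0

/-- Permutation matrix of a permutation `σ`. -/
def permMatrix {n : ℕ} (σ : Equiv.Perm (Fin n)) : Matrix (Fin n) (Fin n) ℝ :=
  Matrix.of fun i j => if σ i = j then 1 else 0

lemma exists_block_aux (k : ℕ) (m : ℕ → ℕ) (t : ℕ)
    (ht : t < ∑ l ∈ Finset.range k, m l) :
    ∃ j < k, (∑ l ∈ Finset.range j, m l) ≤ t ∧ t < ∑ l ∈ Finset.range (j+1), m l := by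
  classical
  set P : ℕ → Prop := fun j => (∑ l ∈ Finset.range j, m l) ≤ t with hP
  have hP0 : P 0 := by simp [hP]
  set j := Nat.findGreatest P k with hj
  have hle : j ≤ k := Nat.findGreatest_le k
  have hspec : P j := Nat.findGreatest_spec (Nat.zero_le k) hP0
  have hjk : j < k := by
    rcases lt_or_eq_of_le hle with h | h
    · exact h
    · exfalso; rw [h] at hspec; exact absurd hspec (not_le.2 ht)
  have hnot : ¬ P (j+1) := Nat.findGreatest_is_greatest (Nat.lt_succ_self j) hjk
  exact ⟨j, hjk, hspec, not_le.1 hnot⟩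

lemma block_unique_aux (m : ℕ → ℕ) {j j' t : ℕ}
    (h1 : ∑ l ∈ Finset.range j, m l ≤ t) (h2 : t < ∑ l ∈ Finset.range (j+1), m l)
    (h3 : ∑ l ∈ Finset.range j', m l ≤ t) (h4 : t < ∑ l ∈ Finset.range (j'+1), m l) :
    j = j' := by
  have hmono : Monotone fun j => ∑ l ∈ Finset.range j, m l :=
    fun a b hab => Finset.sum_le_sum_of_subset (Finset.range_subset_range.2 hab)
  by_contra h
  rcases Nat.lt_or_ge j j' with hlt | hge
  · have : ∑ l ∈ Finset.range (j+1), m l ≤ ∑ l ∈ Finset.range j', m l :=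
      Finset.sum_le_sum_of_subset (Finset.range_subset_range.2 hlt)
    omega
  · have hlt : j' < j := lt_of_le_of_ne hge (Ne.symm h)
    have : ∑ l ∈ Finset.range (j'+1), m l ≤ ∑ l ∈ Finset.range j, m l :=
      Finset.sum_le_sum_of_subset (Finset.range_subset_range.2 hlt)
    omega

/-- Corollary 1 of the paper: `r = 1`, all interior block sizes
equal; if every partition matrix `X ∈ P_m` satisfies `⟨A, X B_{1,k} Xᵀ⟩ > 0`,
then `bdw(A) > m_2` (0-indexed: `m 1`). -/
theorem bandwidth_gt_of_equal_interior_blocks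
    (n k : ℕ) (m : ℕ → ℕ) (A : Matrix (Fin n) (Fin n) ℝ)
    (hA : IsAdjacency A) (hk3 : 3 ≤ k) (hkn : k ≤ n)
    (hm : ∀ i < k, 1 ≤ m i) (hsum : ∑ i ∈ Finset.range k, m i = n)
    (hmid : ∀ i, 1 ≤ i → i ≤ k - 2 → m i = m 1)
    (hpos : ∀ X : Matrix (Fin n) (Fin k) ℝ, IsPartitionMatrix n k m X →
      0 < traceInner A (X * Bmat k 1 * Xᵀ)) :
    m 1 < bdw A := by
  classical
  have key : ∀ φ : Equiv.Perm (Fin n), m 1 + 1 ≤ bdwLabel A φ := by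
    intro φ
    by_contra hcon
    push_neg at hcon
    set S : ℕ → ℕ := fun j => ∑ l ∈ Finset.range j, m l with hSdef
    have hSmono : Monotone S :=
      fun a b hab => Finset.sum_le_sum_of_subset (Finset.range_subset_range.2 hab)
    have hSk : S k = n := hsum
    set X : Matrix (Fin n) (Fin k) ℝ := Matrix.of fun (i : Fin n) (j : Fin k) =>
      if S (j : ℕ) ≤ (φ i : ℕ) ∧ (φ i : ℕ) < S ((j : ℕ) + 1) then 1 else 0 with hXdef
    have hX01 : ∀ i j, X i j = 0 ∨ X i j = 1 := by
      intro i j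
      simp only [hXdef, Matrix.of_apply]
      split <;> simp
    have hPart : IsPartitionMatrix n k m X := by
      refine ⟨hX01, ?_, ?_⟩
      · intro i
        obtain ⟨j0, hj0k, h1, h2⟩ := exists_block_aux k m (φ i : ℕ)
          (by rw [hsum]; exact (φ i).isLt)
        rw [Finset.sum_eq_single (⟨j0, hj0k⟩ : Fin k)]
        · simp only [hXdef, Matrix.of_apply]
          rw [if_pos ⟨h1, h2⟩]
        · intro b _ hb
          simp only [hXdef, Matrix.of_apply]
          rw [if_neg]
          intro hcond
          exact hb (Fin.ext (block_unique_aux m hcond.1 hcond.2 h1 h2))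
        · intro h; exact absurd (Finset.mem_univ _) h
      · intro j
        have hstep : ∑ i : Fin n, X i j
            = ∑ t : Fin n, (if S (j : ℕ) ≤ (t : ℕ) ∧ (t : ℕ) < S ((j : ℕ) + 1)
                then (1 : ℝ) else 0) := by
          rw [← Equiv.sum_comp φ
            (fun t : Fin n => if S (j : ℕ) ≤ (t : ℕ) ∧ (t : ℕ) < S ((j : ℕ) + 1)
              then (1 : ℝ) else 0)]
          rfl
        rw [hstep, Fin.sum_univ_eq_sum_range
          (fun t => if S (j : ℕ) ≤ t ∧ t < S ((j : ℕ) + 1) then (1 : ℝ) else 0),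
          Finset.sum_boole]
        have hfil : (Finset.range n).filter
            (fun t => S (j : ℕ) ≤ t ∧ t < S ((j : ℕ) + 1))
            = Finset.Ico (S (j : ℕ)) (S ((j : ℕ) + 1)) := by
          have hle : S ((j : ℕ) + 1) ≤ n := by
            rw [← hSk]; exact hSmono j.isLt
          ext t
          simp only [Finset.mem_filter, Finset.mem_range, Finset.mem_Ico]
          omega
        have hcard : S ((j : ℕ) + 1) - S (j : ℕ) = m (j : ℕ) := by
          have h := Finset.sum_range_succ m (j : ℕ)
          simp only [hSdef]
          omega
        rw [hfil, Nat.card_Ico, hcard]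
    have hposX := hpos X hPart
    have hzero : traceInner A (X * Bmat k 1 * Xᵀ) = 0 := by
      unfold traceInner
      rw [Matrix.trace]
      apply Finset.sum_eq_zero
      intro i _
      rw [Matrix.diag_apply, Matrix.mul_apply]
      apply Finset.sum_eq_zero
      intro j _
      rw [Matrix.transpose_apply]
      rcases eq_or_ne (A j i) 0 with hAji | hAji
      · rw [hAji, zero_mul]
      · have hedge : (((φ j : ℕ) : ℤ) - ((φ i : ℕ) : ℤ)).natAbs ≤ m 1 := by
          have hsup2 : (((φ j : ℕ) : ℤ) - ((φ i : ℕ) : ℤ)).natAbs ≤ bdwLabel A φ := by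
            unfold bdwLabel
            have heq : (((φ j : ℕ) : ℤ) - ((φ i : ℕ) : ℤ)).natAbs
                = (fun p : Fin n × Fin n => if A p.1 p.2 ≠ 0 then
                    (((φ p.1 : ℕ) : ℤ) - ((φ p.2 : ℕ) : ℤ)).natAbs else 0)
                  ((j, i) : Fin n × Fin n) := by
              simp [hAji]
            rw [heq]
            exact Finset.le_sup (f := fun p : Fin n × Fin n => if A p.1 p.2 ≠ 0 then
                (((φ p.1 : ℕ) : ℤ) - ((φ p.2 : ℕ) : ℤ)).natAbs else 0)
              (Finset.mem_univ ((j, i) : Fin n × Fin n))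
          omega
        have hM : (X * Bmat k 1 * Xᵀ) j i = 0 := by
          rw [Matrix.mul_apply]
          apply Finset.sum_eq_zero
          intro v _
          rw [Matrix.mul_apply, Matrix.transpose_apply, Finset.sum_mul]
          apply Finset.sum_eq_zero
          intro u _
          by_cases h1 : S (u : ℕ) ≤ (φ j : ℕ) ∧ (φ j : ℕ) < S ((u : ℕ) + 1)
          · by_cases h2 : S (v : ℕ) ≤ (φ i : ℕ) ∧ (φ i : ℕ) < S ((v : ℕ) + 1)
            · by_cases h3 : ((1 : ℕ) : ℤ) < |((u : ℕ) : ℤ) - ((v : ℕ) : ℤ)|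
              · exfalso
                have huv : (u : ℕ) + 2 ≤ (v : ℕ) ∨ (v : ℕ) + 2 ≤ (u : ℕ) := by
                  rcases abs_cases (((u : ℕ) : ℤ) - ((v : ℕ) : ℤ)) with ⟨hab, _⟩ | ⟨hab, _⟩ <;>
                    rw [hab] at h3 <;> omega
                have hu : (u : ℕ) < k := u.isLt
                have hv : (v : ℕ) < k := v.isLt
                rcases huv with huv | huv
                · have hmw : m ((u : ℕ) + 1) = m 1 := hmid ((u : ℕ) + 1) (by omega) (by omega)
                  have hs2 : S ((u : ℕ) + 2) = S ((u : ℕ) + 1) + m ((u : ℕ) + 1) :=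
                    Finset.sum_range_succ m ((u : ℕ) + 1)
                  have hmo : S ((u : ℕ) + 2) ≤ S (v : ℕ) := hSmono huv
                  have ha := h1.2
                  have hb := h2.1
                  omega
                · have hmw : m ((v : ℕ) + 1) = m 1 := hmid ((v : ℕ) + 1) (by omega) (by omega)
                  have hs2 : S ((v : ℕ) + 2) = S ((v : ℕ) + 1) + m ((v : ℕ) + 1) :=
                    Finset.sum_range_succ m ((v : ℕ) + 1)
                  have hmo : S ((v : ℕ) + 2) ≤ S (u : ℕ) := hSmono huv
                  have ha := h2.2
                  have hb := h1.1
                  omega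
              · have hB : Bmat k 1 u v = 0 := by
                  simp only [Bmat, Matrix.of_apply]
                  rw [if_neg h3]
                rw [hB, mul_zero, zero_mul]
            · have hXi : X i v = 0 := by
                simp only [hXdef, Matrix.of_apply]
                rw [if_neg h2]
              rw [hXi, mul_zero]
          · have hXj : X j u = 0 := by
              simp only [hXdef, Matrix.of_apply]
              rw [if_neg h1]
            rw [hXj, zero_mul, zero_mul]
        rw [hM, mul_zero]
    linarith
  have h2 : m 1 + 1 ≤ bdw A := le_ciInf key
  omega

end
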